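/- Let G be a commutative group and let σ, σ' ∈ G satisfy σ² = 1 and σ'² = 1. In the group Hopf algebra A = ℂ[G], the element x := (1 + σ) ⊗ 1 + (1 - σ) ⊗ σ' of A ⊗ A satisfies the Drinfeld-twist cocycle identity (Δ ⊗ id)(x) · (x ⊗ 1) = (id ⊗ Δ)(x) · (1 ⊗ x) in A ⊗ A ⊗ A. -/

import Mathlib

open scoped TensorProduct

noncomputable section

variable (G : Type*) [CommGroup G]

/-- The comultiplication of the group Hopf algebra `ℂ[G]`, determined by `Δ(g) = g ⊗ g`. -/
def Delta : MonoidAlgebra ℂ G →ₐ[ℂ] MonoidAlgebra ℂ G ⊗[ℂ] MonoidAlgebra ℂ G :=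
  MonoidAlgebra.lift ℂ _ G
    { toFun := fun g => MonoidAlgebra.of ℂ G g ⊗ₜ[ℂ] MonoidAlgebra.of ℂ G g
      map_one' := by simp [Algebra.TensorProduct.one_def, MonoidAlgebra.one_def]
      map_mul' := fun g h => by
        simp [Algebra.TensorProduct.tmul_mul_tmul, map_mul] }

/-- The element `x_{σ,σ'} = (1+σ) ⊗ 1 + (1−σ) ⊗ σ'` of `ℂ[G] ⊗ ℂ[G]`. -/
def xEl (σ σ' : G) : MonoidAlgebra ℂ G ⊗[ℂ] MonoidAlgebra ℂ G :=
  (1 + MonoidAlgebra.of ℂ G σ) ⊗ₜ[ℂ] 1 +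
    (1 - MonoidAlgebra.of ℂ G σ) ⊗ₜ[ℂ] MonoidAlgebra.of ℂ G σ'

set_option maxHeartbeats 1000000 in
/-- If `σ² = 1` and `σ'² = 1` then `x = (1+σ)⊗1 + (1−σ)⊗σ'` satisfies the Drinfeld-twist
cocycle identity `(Δ ⊗ id)(x)·(x ⊗ 1) = (id ⊗ Δ)(x)·(1 ⊗ x)`. -/
theorem xEl_cocycle (σ σ' : G) (hσ : σ ^ 2 = 1) (hσ' : σ' ^ 2 = 1) :
    Algebra.TensorProduct.assoc ℂ ℂ ℂ (MonoidAlgebra ℂ G) (MonoidAlgebra ℂ G) (MonoidAlgebra ℂ G)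
        ((Algebra.TensorProduct.map (Delta G) (AlgHom.id ℂ (MonoidAlgebra ℂ G))) (xEl G σ σ') *
          ((xEl G σ σ') ⊗ₜ[ℂ] (1 : MonoidAlgebra ℂ G))) =
      (Algebra.TensorProduct.map (AlgHom.id ℂ (MonoidAlgebra ℂ G)) (Delta G)) (xEl G σ σ') *
        ((1 : MonoidAlgebra ℂ G) ⊗ₜ[ℂ] (xEl G σ σ')) := by
  have hs : (MonoidAlgebra.of ℂ G σ) * (MonoidAlgebra.of ℂ G σ) = 1 := by
    rw [← map_mul, ← pow_two, hσ, map_one]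
  have hs' : (MonoidAlgebra.of ℂ G σ') * (MonoidAlgebra.of ℂ G σ') = 1 := by
    rw [← map_mul, ← pow_two, hσ', map_one]
  have hD : Delta G (MonoidAlgebra.of ℂ G σ) =
      MonoidAlgebra.of ℂ G σ ⊗ₜ[ℂ] MonoidAlgebra.of ℂ G σ := by
    simp [Delta]
  have hD' : Delta G (MonoidAlgebra.of ℂ G σ') =
      MonoidAlgebra.of ℂ G σ' ⊗ₜ[ℂ] MonoidAlgebra.of ℂ G σ' := by
    simp [Delta]
  simp only [xEl, map_add, map_sub, map_one, Algebra.TensorProduct.map_tmul, hD, hD',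
    AlgHom.coe_id, id_eq, Algebra.TensorProduct.one_def, TensorProduct.add_tmul,
    TensorProduct.sub_tmul, TensorProduct.tmul_add, TensorProduct.tmul_sub,
    add_mul, mul_add, sub_mul, mul_sub, Algebra.TensorProduct.tmul_mul_tmul,
    Algebra.TensorProduct.assoc_tmul, one_mul, mul_one, hs, hs', map_mul]
  have h1 : ∀ x y z : MonoidAlgebra ℂ G ⊗[ℂ] (MonoidAlgebra ℂ G ⊗[ℂ] MonoidAlgebra ℂ G),
      (x - y) * z = x * z - y * z := fun x y z => sub_mul x y z
  have h2 : ∀ x y z : MonoidAlgebra ℂ G ⊗[ℂ] (MonoidAlgebra ℂ G ⊗[ℂ] MonoidAlgebra ℂ G),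
      x * (y - z) = x * y - x * z := fun x y z => mul_sub x y z
  simp only [h1, h2, Algebra.TensorProduct.tmul_mul_tmul, one_mul, mul_one, hs, hs',
    mul_comm (MonoidAlgebra.of ℂ G σ') (MonoidAlgebra.of ℂ G σ)]
  abel
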